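/- Let f be a càdlàg function without negative jumps that is 'good' on [0,T]: in particular, f attains no local minimum at any right endpoint r of an excursion interval. Then f is continuous at every right endpoint r of every excursion interval of f. -/

import Mathlib

open Set Function

/-- `f` has left limits at every point. -/
def HasLeftLimits (f : ℝ → ℝ) : Prop :=
  ∀ x : ℝ, ∃ l : ℝ, Filter.Tendsto f (nhdsWithin x (Iio x)) (nhds l)

/-- `f` is right-continuous. -/
def RightCont (f : ℝ → ℝ) : Prop :=
  ∀ x : ℝ, ContinuousWithinAt f (Ici x) x

/-- `f` has no negative jumps. -/
def NoNegJumps (f : ℝ → ℝ) : Prop :=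
  ∀ x : ℝ, Function.leftLim f x ≤ f x

/-- `(l, r)` is an excursion interval of `f`:
`f(l-) = f(r-) = inf_{t ≤ r} f(t)` and `f(t) > inf_{s ≤ l} f(s)` on `(l, r)`. -/
def IsExcursionInterval (f : ℝ → ℝ) (l r : ℝ) : Prop :=
  0 ≤ l ∧ l < r ∧
  Function.leftLim f l = sInf (f '' Icc 0 r) ∧
  Function.leftLim f r = sInf (f '' Icc 0 r) ∧
  ∀ t ∈ Ioo l r, sInf (f '' Icc 0 l) < f t

/-- The right endpoints of excursion intervals of `f` contained in `[0, T]`. -/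
def ExcEnds (f : ℝ → ℝ) (T : ℝ) : Set ℝ :=
  {r | ∃ l, IsExcursionInterval f l r ∧ r ≤ T}

/-- `f` is good on `[0, T]`: the excursion right-endpoints have no isolated points,
the complement of the union of excursion intervals in `[0, sup of endpoints]` is
Lebesgue-null, and `f` attains no local minimum at any excursion right-endpoint. -/
def GoodOn (f : ℝ → ℝ) (T : ℝ) : Prop :=
  (∀ r ∈ ExcEnds f T, r ∈ closure (ExcEnds f T \ {r})) ∧
  MeasureTheory.volume
      (Icc (0 : ℝ) (sSup (ExcEnds f T)) \
        ⋃ p ∈ {p : ℝ × ℝ | IsExcursionInterval f p.1 p.2 ∧ p.2 ≤ T}, Ioo p.1 p.2) = 0 ∧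
  ∀ r ∈ ExcEnds f T, ¬ IsLocalMin f r

/-- At every point, a càdlàg function is bounded below on a neighbourhood. -/
lemma cadlag_local_lb (f : ℝ → ℝ) (hrc : RightCont f) (hll : HasLeftLimits f) (x : ℝ) :
    ∃ M : ℝ, ∃ δ > (0:ℝ), ∀ s ∈ Ioo (x - δ) (x + δ), M ≤ f s := by
  obtain ⟨L, hL⟩ := hll x
  have ev1 : ∀ᶠ s in nhdsWithin x (Iio x), L - 1 ≤ f s :=
    hL.eventually (eventually_ge_nhds (by linarith))
  obtain ⟨l', hl', hsub1⟩ := mem_nhdsLT_iff_exists_Ioo_subset.1 ev1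
  have ev2 : ∀ᶠ s in nhdsWithin x (Ici x), f x - 1 ≤ f s :=
    (hrc x).eventually (eventually_ge_nhds (by linarith))
  obtain ⟨u, hu, hsub2⟩ := mem_nhdsGE_iff_exists_Ico_subset.1 ev2
  refine ⟨min (L - 1) (f x - 1), min (x - l') (u - x), by
    simp only [lt_min_iff]; exact ⟨by simpa using hl', by simpa using hu⟩, ?_⟩
  intro s hs
  rcases lt_or_ge s x with h | h
  · refine le_trans (min_le_left _ _) (hsub1 ⟨?_, h⟩)
    have := hs.1
    have h1 : x - min (x - l') (u - x) ≥ x - (x - l') := by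
      have := min_le_left (x - l') (u - x); linarith
    linarith
  · refine le_trans (min_le_right _ _) (hsub2 ⟨h, ?_⟩)
    have := hs.2
    have h1 : x + min (x - l') (u - x) ≤ x + (u - x) := by
      have := min_le_right (x - l') (u - x); linarith
    linarith

/-- A càdlàg function is bounded below on compact intervals. -/
lemma cadlag_bddBelow (f : ℝ → ℝ) (hrc : RightCont f) (hll : HasLeftLimits f) (a b : ℝ) :
    BddBelow (f '' Icc a b) := by
  choose M δ hδ hM using cadlag_local_lb f hrc hll
  obtain ⟨t, -, hcov⟩ := isCompact_Icc.elim_nhds_subcover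
      (fun x => Ioo (x - δ x) (x + δ x))
      (fun x _ => Ioo_mem_nhds (by linarith [hδ x]) (by linarith [hδ x]))
  rcases t.eq_empty_or_nonempty with rfl | hne
  · refine ⟨0, ?_⟩
    rintro y ⟨s, hs, rfl⟩
    have := hcov hs
    simp at this
  · refine ⟨(t.image M).min' (hne.image M), ?_⟩
    rintro y ⟨s, hs, rfl⟩
    obtain ⟨x, hxt, hx⟩ := Set.mem_iUnion₂.1 (hcov hs)
    exact le_trans (Finset.min'_le _ _ (Finset.mem_image_of_mem M hxt)) (hM x s hx)

lemma tendsto_leftLim' (f : ℝ → ℝ) (hll : HasLeftLimits f) (x : ℝ) :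
    Filter.Tendsto f (nhdsWithin x (Iio x)) (nhds (Function.leftLim f x)) := by
  obtain ⟨L, hL⟩ := hll x
  rwa [leftLim_eq_of_tendsto hL]

/-- If `f x > v` and every excursion end to the right of `x` has running infimum at most `v`,
then there are no excursion ends immediately to the right of `x`. -/
lemma no_excEnds_right (f : ℝ → ℝ) (T : ℝ) (hrc : RightCont f) (hll : HasLeftLimits f)
    (x v : ℝ) (hv : v < f x)
    (hy : ∀ y ∈ ExcEnds f T, x < y → sInf (f '' Icc 0 y) ≤ v) :
    ∃ δ > (0:ℝ), ∀ y ∈ ExcEnds f T, y ∉ Ioo x (x + δ) := by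
  set c := (v + f x) / 2 with hc
  have hcv : v < c := by rw [hc]; linarith
  have hcf : c < f x := by rw [hc]; linarith
  have ev : ∀ᶠ s in nhdsWithin x (Ici x), c < f s := (hrc x).eventually (eventually_gt_nhds hcf)
  obtain ⟨u, hu, hsub⟩ := mem_nhdsGE_iff_exists_Ico_subset.1 ev
  refine ⟨u - x, by simpa using hu, ?_⟩
  rintro y hyE hyI
  obtain ⟨ly, hexc, hyT⟩ := id hyE
  have hxy : x < y := hyI.1
  have hyu : y ≤ u := by have := hyI.2; linarith
  have h1 : c ≤ Function.leftLim f y := by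
    refine ge_of_tendsto (tendsto_leftLim' f hll y) ?_
    filter_upwards [Ioo_mem_nhdsLT_of_mem (show y ∈ Ioc x y from ⟨hxy, le_refl y⟩)] with s hs
    exact (hsub ⟨hs.1.le, lt_of_lt_of_le hs.2 hyu⟩).le
  have h2 : Function.leftLim f y ≤ v := by
    rw [hexc.2.2.2.1]; exact hy y hyE hxy
  linarith

/-- A good càdlàg function without negative jumps is continuous at every right
endpoint of every excursion interval. -/
theorem good_continuousAt_excursion_end (f : ℝ → ℝ) (T : ℝ)
    (hrc : RightCont f) (hll : HasLeftLimits f) (hnn : NoNegJumps f)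
    (hgood : GoodOn f T) :
    ∀ r ∈ ExcEnds f T, ContinuousAt f r := by
  intro r hrE
  obtain ⟨l, ⟨hl0, hlr, hLl, hLr, hInt⟩, hrT⟩ := id hrE
  set m := sInf (f '' Icc 0 r) with hm
  have hr0 : (0:ℝ) ≤ r := hl0.trans hlr.le
  have bdd : ∀ c : ℝ, BddBelow (f '' Icc 0 c) := cadlag_bddBelow f hrc hll 0
  -- monotonicity of the running infimum
  have mono : ∀ a b : ℝ, 0 ≤ a → a ≤ b → sInf (f '' Icc 0 b) ≤ sInf (f '' Icc 0 a) := by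
    intro a b ha hab
    exact csInf_le_csInf (bdd b) ⟨f a, ⟨a, ⟨ha, le_refl a⟩, rfl⟩⟩
      (Set.image_mono (f := f) (Icc_subset_Icc_right hab))
  -- interior excursion ends jump up
  have interior_jump : ∀ x ∈ Ioo l r, sInf (f '' Icc 0 x) < f x := by
    intro x hx
    exact lt_of_le_of_lt (mono l x hl0 hx.1.le) (hInt x hx)
  have hfr : f r = m := by
    have h1 : m ≤ f r := by rw [← hLr]; exact hnn r
    rcases eq_or_lt_of_le h1 with h | hj
    · exact h.symm
    · exfalso
      -- dead zone to the right of r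
      obtain ⟨δ₀, hδ₀, hdead₀⟩ := no_excEnds_right f T hrc hll r m hj
        (fun y hyE hry => mono r y hr0 hry.le)
      -- excursion ends accumulate at r from the left
      have hacc : ∀ η > (0:ℝ), ∃ y ∈ ExcEnds f T, y ∈ Ioo (r - η) r := by
        intro η hη
        obtain ⟨z, hz, hzd⟩ := Metric.mem_closure_iff.1 (hgood.1 r hrE) (min η δ₀)
          (lt_min hη hδ₀)
        have hzr : z ≠ r := fun h => hz.2 (by simp [h])
        rw [Real.dist_eq] at hzd
        obtain ⟨hd1, hd2⟩ := abs_lt.1 hzd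
        have hmin1 := min_le_left η δ₀
        have hmin2 := min_le_right η δ₀
        rcases lt_or_gt_of_ne hzr with h | h
        · exact ⟨z, hz.1, ⟨by linarith, h⟩⟩
        · exact absurd (⟨h, by linarith⟩ : z ∈ Ioo r (r + δ₀)) (hdead₀ z hz.1)
      -- a first interior excursion end
      obtain ⟨y₁, hy₁E, hy₁I⟩ := hacc (r - l) (by linarith)
      have hy₁ : y₁ ∈ Ioo l r := ⟨by have := hy₁I.1; linarith, hy₁I.2⟩
      have hy₁0 : (0:ℝ) ≤ y₁ := le_of_lt (lt_of_le_of_lt hl0 hy₁.1)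
      obtain ⟨δ₁, hδ₁, hdead₁⟩ := no_excEnds_right f T hrc hll y₁ (sInf (f '' Icc 0 y₁))
        (interior_jump y₁ hy₁) (fun y _ hxy => mono y₁ y hy₁0 hxy.le)
      -- a point q in (l, r) that is not an excursion end
      set δ' := min δ₁ (r - y₁) with hδ'
      have hδ'pos : 0 < δ' := lt_min hδ₁ (by linarith [hy₁.2])
      set q := y₁ + δ' / 2 with hq
      have hqI : q ∈ Ioo y₁ (y₁ + δ₁) := by
        constructor
        · rw [hq]; linarith
        · rw [hq]; have := min_le_left δ₁ (r - y₁); linarith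
      have hqr : q < r := by
        rw [hq]; have := min_le_right δ₁ (r - y₁); linarith
      have hql : l < q := lt_trans hy₁.1 hqI.1
      have hq3 : q ∉ ExcEnds f T := fun h => hdead₁ q h hqI
      -- the infimum of excursion ends in [q, r)
      set A := ExcEnds f T ∩ Ico q r with hA
      obtain ⟨y₀, hy₀E, hy₀I⟩ := hacc (r - q) (by linarith)
      have hy₀A : y₀ ∈ A := ⟨hy₀E, ⟨by have := hy₀I.1; linarith, hy₀I.2⟩⟩
      have hAne : A.Nonempty := ⟨y₀, hy₀A⟩
      have hAbdd : BddBelow A := ⟨q, fun z hz => hz.2.1⟩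
      set x := sInf A with hx
      have hxq : q ≤ x := le_csInf hAne (fun z hz => hz.2.1)
      have hxy₀ : x ≤ y₀ := csInf_le hAbdd hy₀A
      have hxIoo : x ∈ Ioo l r := ⟨lt_of_lt_of_le hql hxq, lt_of_le_of_lt hxy₀ hy₀I.2⟩
      have hx0 : (0:ℝ) ≤ x := le_of_lt (lt_of_le_of_lt hl0 hxIoo.1)
      by_cases hxE : x ∈ ExcEnds f T
      · -- x is an excursion end: no accumulation at x, contradiction
        obtain ⟨δ₂, hδ₂, hdead₂⟩ := no_excEnds_right f T hrc hll x (sInf (f '' Icc 0 x))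
          (interior_jump x hxIoo) (fun y _ hxy => mono x y hx0 hxy.le)
        have hxq' : q < x := lt_of_le_of_ne hxq (fun h => hq3 (h ▸ hxE))
        obtain ⟨z, hz, hzd⟩ := Metric.mem_closure_iff.1 (hgood.1 x hxE) (min δ₂ (x - q))
          (lt_min hδ₂ (by linarith))
        have hzx : z ≠ x := fun h => hz.2 (by simp [h])
        rw [Real.dist_eq] at hzd
        obtain ⟨hd1, hd2⟩ := abs_lt.1 hzd
        have hmin1 := min_le_left δ₂ (x - q)
        have hmin2 := min_le_right δ₂ (x - q)
        rcases lt_or_gt_of_ne hzx with h | h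
        · -- z would be an element of A below its infimum
          have hzA : z ∈ A := ⟨hz.1, ⟨by linarith, lt_trans h hxIoo.2⟩⟩
          have := csInf_le hAbdd hzA
          rw [← hx] at this
          linarith
        · exact hdead₂ z hz.1 ⟨h, by linarith⟩
      · -- x is not an excursion end: elements of A just above x contradict the dead zone
        obtain ⟨δ₃, hδ₃, hdead₃⟩ := no_excEnds_right f T hrc hll x (sInf (f '' Icc 0 l))
          (hInt x hxIoo) (fun y _ hxy => mono l y hl0 (le_of_lt (lt_trans hxIoo.1 hxy)))
        obtain ⟨z, hzA, hzlt⟩ := exists_lt_of_csInf_lt hAne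
          (show sInf A < x + δ₃ by rw [← hx]; linarith)
        have h1 : x ≤ z := csInf_le hAbdd hzA
        have hne : z ≠ x := fun h => hxE (h ▸ hzA.1)
        exact hdead₃ z hzA.1 ⟨lt_of_le_of_ne h1 (Ne.symm hne), hzlt⟩
  -- continuity at r
  have hlim : Filter.Tendsto f (nhdsWithin r (Iio r)) (nhds (f r)) := by
    have h := tendsto_leftLim' f hll r
    rwa [hLr, ← hfr] at h
  have : ContinuousAt f r := by
    rw [ContinuousAt, ← nhdsLT_sup_nhdsGE r, Filter.tendsto_sup]
    exact ⟨hlim, hrc r⟩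
  exact this
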